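/- Let G be a connected d-regular graph and e = {1,2} an edge of G such that G−e is connected. Then the minimum coordinate of the principal eigenvector of G−e is attained at vertex 1 or vertex 2. -/

import Mathlib

open SimpleGraph Matrix

/-- Let `G` be a connected `d`-regular graph and `e = {a,b}` an edge such that `G − e`
is connected. Then the minimum coordinate of the principal eigenvector of `G − e` is
attained at `a` or at `b`. -/
theorem stmt_12 {n d : ℕ} (G : SimpleGraph (Fin n)) [DecidableRel G.Adj] (hG : G.Connected)
    (hreg : G.IsRegularOfDegree d) (a b : Fin n) (hab : G.Adj a b)
    [DecidableRel (G.deleteEdges {s(a, b)}).Adj]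
    (hconn : (G.deleteEdges {s(a, b)}).Connected)
    (μ : ℝ) (q : Fin n → ℝ) (hpos : ∀ w, 0 < q w)
    (heig : (G.deleteEdges {s(a, b)}).adjMatrix ℝ *ᵥ q = μ • q) :
    (∀ i, q a ≤ q i) ∨ (∀ i, q b ≤ q i) := by
  classical
  set G' := G.deleteEdges {s(a, b)} with hG'
  have hne : a ≠ b := hab.ne
  -- adjacency in G' away from a, b agrees with G
  have hadj : ∀ v w : Fin n, v ≠ a → v ≠ b → (G'.Adj v w ↔ G.Adj v w) := by
    intro v w hva hvb
    rw [hG', SimpleGraph.deleteEdges_adj]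
    simp only [Set.mem_singleton_iff, Sym2.eq_iff]
    constructor
    · exact fun h => h.1
    · intro h
      exact ⟨h, fun hc => by rcases hc with ⟨rfl, rfl⟩ | ⟨rfl, rfl⟩ <;> simp_all⟩
  -- neighbor finsets at a and b
  have hNa : G'.neighborFinset a = G.neighborFinset a \ {b} := by
    ext w
    simp only [SimpleGraph.mem_neighborFinset, Finset.mem_sdiff, Finset.mem_singleton, hG',
      SimpleGraph.deleteEdges_adj, Set.mem_singleton_iff, Sym2.eq_iff]
    have := hne
    tauto
  have hNb : G'.neighborFinset b = G.neighborFinset b \ {a} := by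
    ext w
    simp only [SimpleGraph.mem_neighborFinset, Finset.mem_sdiff, Finset.mem_singleton, hG',
      SimpleGraph.deleteEdges_adj, Set.mem_singleton_iff, Sym2.eq_iff]
    have := hne
    tauto
  have hdega : G'.degree a = d - 1 := by
    rw [SimpleGraph.degree, hNa, Finset.card_sdiff_of_subset (by simpa using hab),
      Finset.card_singleton, ← SimpleGraph.degree, hreg a]
  have hdegb : G'.degree b = d - 1 := by
    rw [SimpleGraph.degree, hNb, Finset.card_sdiff_of_subset (by simpa using hab.symm),
      Finset.card_singleton, ← SimpleGraph.degree, hreg b]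
  have hdeg : ∀ v : Fin n, v ≠ a → v ≠ b → G'.degree v = d := by
    intro v hva hvb
    rw [SimpleGraph.degree]
    have : G'.neighborFinset v = G.neighborFinset v := by
      ext w; simp only [SimpleGraph.mem_neighborFinset]; exact hadj v w hva hvb
    rw [this, ← SimpleGraph.degree, hreg v]
  have hd1 : 1 ≤ d := by
    have := hreg a
    rw [← this]
    exact Finset.card_pos.mpr ⟨b, by simpa using hab⟩
  -- eigen equation pointwise
  have heig' : ∀ v : Fin n, ∑ w ∈ G'.neighborFinset v, q w = μ * q v := by
    intro v
    have := congrFun heig v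
    rw [SimpleGraph.adjMatrix_mulVec_apply, Pi.smul_apply, smul_eq_mul] at this
    convert this using 2
    ext w
    simp only [SimpleGraph.mem_neighborFinset]
    exact Iff.rfl
  -- sum identity
  have hS : 0 < ∑ w, q w :=
    Finset.sum_pos (fun w _ => hpos w) ⟨a, Finset.mem_univ a⟩
  have hsum : (d - μ) * (∑ w, q w) = q a + q b := by
    have h1 : ∑ v, ∑ w ∈ G'.neighborFinset v, q w = μ * ∑ w, q w := by
      rw [Finset.mul_sum]
      exact Finset.sum_congr rfl fun v _ => heig' v
    have h2 : ∑ v, ∑ w ∈ G'.neighborFinset v, q w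
        = ∑ w, (G'.degree w : ℝ) * q w := by
      have : ∀ v : Fin n, ∑ w ∈ G'.neighborFinset v, q w
          = ∑ w, (if G'.Adj v w then q w else 0) := by
        intro v
        rw [← Finset.sum_filter]
        congr 1
        ext w
        simp [SimpleGraph.mem_neighborFinset]
      simp_rw [this]
      rw [Finset.sum_comm]
      refine Finset.sum_congr rfl fun w _ => ?_
      have : ∑ v, (if G'.Adj v w then q w else 0)
          = ∑ v ∈ Finset.univ.filter (fun v => G'.Adj v w), q w := by
        rw [Finset.sum_filter]
      rw [this, Finset.sum_const]
      have hfil : Finset.univ.filter (fun v => G'.Adj v w) = G'.neighborFinset w := by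
        ext v
        simp [SimpleGraph.mem_neighborFinset, SimpleGraph.adj_comm]
      rw [hfil, SimpleGraph.degree, nsmul_eq_mul]
    have h3 : ∑ w, ((d : ℝ) * q w - (G'.degree w : ℝ) * q w) = q a + q b := by
      have hfun : ∀ w : Fin n, (d : ℝ) * q w - (G'.degree w : ℝ) * q w
          = (if w = a then q a else 0) + (if w = b then q b else 0) := by
        intro w
        by_cases hwa : w = a
        · subst hwa
          rw [hdega]
          have : ((d - 1 : ℕ) : ℝ) = (d : ℝ) - 1 := by
            rw [Nat.cast_sub hd1, Nat.cast_one]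
          rw [this]
          simp [hne]
          ring
        · by_cases hwb : w = b
          · subst hwb
            rw [hdegb]
            have : ((d - 1 : ℕ) : ℝ) = (d : ℝ) - 1 := by
              rw [Nat.cast_sub hd1, Nat.cast_one]
            rw [this]
            simp [hwa]
            ring
          · rw [hdeg w hwa hwb]
            simp [hwa, hwb]
      simp_rw [hfun]
      rw [Finset.sum_add_distrib, Finset.sum_ite_eq' Finset.univ a,
        Finset.sum_ite_eq' Finset.univ b]
      simp
    rw [Finset.sum_sub_distrib, ← Finset.mul_sum] at h3
    linear_combination h3 + h1 - h2
  have hμd : μ < d := by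
    by_contra hle
    push_neg at hle
    have : (d - μ) * (∑ w, q w) ≤ 0 :=
      mul_nonpos_of_nonpos_of_nonneg (by linarith) hS.le
    have hpos' : 0 < q a + q b := by linarith [hpos a, hpos b]
    linarith [hsum]
  -- now the contradiction argument
  by_contra hcon
  push_neg at hcon
  obtain ⟨⟨i, hi⟩, ⟨j, hj⟩⟩ := hcon
  obtain ⟨v, -, hv⟩ := Finset.exists_min_image Finset.univ q ⟨a, Finset.mem_univ a⟩
  have hv' : ∀ i, q v ≤ q i := fun i => hv i (Finset.mem_univ i)
  have hva : v ≠ a := by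
    intro h; subst h
    exact absurd (hv' i) (not_le.mpr hi)
  have hvb : v ≠ b := by
    intro h; subst h
    exact absurd (hv' j) (not_le.mpr hj)
  have hkey : (d : ℝ) * q v ≤ μ * q v := by
    rw [← heig' v]
    calc (d : ℝ) * q v = ∑ _w ∈ G'.neighborFinset v, q v := by
          rw [Finset.sum_const, nsmul_eq_mul, SimpleGraph.card_neighborFinset_eq_degree,
            hdeg v hva hvb]
      _ ≤ ∑ w ∈ G'.neighborFinset v, q w :=
          Finset.sum_le_sum fun w _ => hv' w
  have : (d : ℝ) ≤ μ := le_of_mul_le_mul_right (by linarith [hkey]) (hpos v)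
  linarith
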